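/- The Hofstadter G-sequence, defined by h(0)=0 and h(n)=n-h(h(n-1)) for n≥1, satisfies h(n) = ⌊(n+1)/φ⌋ = ⌊(n+1)φ⌋ - n - 1 for all n ≥ 1, where φ = (1+√5)/2. -/

import Mathlib

noncomputable def phi : ℝ := (1 + Real.sqrt 5) / 2

noncomputable def alph : ℝ := (Real.sqrt 5 - 1) / 2

lemma sqrt5_sq : Real.sqrt 5 * Real.sqrt 5 = 5 :=
  Real.mul_self_sqrt (by norm_num)

lemma sqrt5_lb : (2:ℝ) < Real.sqrt 5 := by
  nlinarith [sqrt5_sq, Real.sqrt_nonneg 5]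

lemma sqrt5_ub : Real.sqrt 5 < 3 := by
  nlinarith [sqrt5_sq, Real.sqrt_nonneg 5]

lemma alph_pos : 0 < alph := by unfold alph; linarith [sqrt5_lb]

lemma alph_lt_one : alph < 1 := by unfold alph; linarith [sqrt5_ub]

lemma alph_sq : alph * alph = 1 - alph := by
  unfold alph; nlinarith [sqrt5_sq]

lemma alph_irrational : Irrational alph := by
  have h5 : Irrational (Real.sqrt 5) := by
    simpa using (by norm_num : Nat.Prime 5).irrational_sqrt
  have h1 : Irrational (Real.sqrt 5 - (1:ℤ)) := h5.sub_intCast 1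
  have h2 : Irrational ((Real.sqrt 5 - (1:ℤ)) / (2:ℤ)) := h1.div_intCast (by norm_num)
  simpa [alph] using h2

/-- Key identity. -/
lemma key (n : ℕ) (hn : 1 ≤ n) :
    ⌊((n:ℝ)+1)*alph⌋ + ⌊((⌊(n:ℝ)*alph⌋ : ℝ)+1)*alph⌋ = (n:ℤ) := by
  have hαp := alph_pos
  have hα1 := alph_lt_one
  have hα2 := alph_sq
  set m : ℤ := ⌊(n:ℝ)*alph⌋ with hm
  have hmle : (m:ℝ) ≤ (n:ℝ)*alph := Int.floor_le _
  have hmlt : (n:ℝ)*alph < m+1 := Int.lt_floor_add_one _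
  set f : ℝ := (n:ℝ)*alph - m with hf
  have hf0 : 0 ≤ f := by simp [hf]; linarith
  have hf1 : f < 1 := by simp [hf]; linarith
  have hne : f ≠ 1 - alph := by
    intro hEq
    have hint : ((n:ℝ)+1)*alph = ((m + 1 : ℤ) : ℝ) := by
      push_cast
      nlinarith [hEq]
    have hirr : Irrational (((n+1 : ℕ) : ℤ) * alph) :=
      alph_irrational.intCast_mul (by positivity)
    apply hirr.ne_int (m+1)
    push_cast
    push_cast at hint
    linarith [hint]
  rcases lt_or_gt_of_ne hne with hc | hc
  · have e1 : ⌊((n:ℝ)+1)*alph⌋ = m := by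
      rw [Int.floor_eq_iff]
      constructor
      · nlinarith
      · push_cast; nlinarith
    have e2 : ⌊((m:ℝ)+1)*alph⌋ = (n:ℤ) - m := by
      rw [Int.floor_eq_iff]
      constructor
      · push_cast; nlinarith
      · push_cast; nlinarith
    rw [e1, e2]; ring
  · have e1 : ⌊((n:ℝ)+1)*alph⌋ = m + 1 := by
      rw [Int.floor_eq_iff]
      constructor
      · push_cast; nlinarith
      · push_cast; nlinarith
    have e2 : ⌊((m:ℝ)+1)*alph⌋ = (n:ℤ) - m - 1 := by
      rw [Int.floor_eq_iff]
      constructor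
      · push_cast; nlinarith
      · push_cast; nlinarith
    rw [e1, e2]; ring

noncomputable def G (n : ℕ) : ℕ := (⌊((n:ℝ)+1)*alph⌋).toNat

lemma G_cast (n : ℕ) : (G n : ℤ) = ⌊((n:ℝ)+1)*alph⌋ := by
  unfold G
  exact Int.toNat_of_nonneg (Int.floor_nonneg.mpr (mul_nonneg (by positivity) alph_pos.le))

lemma G_le (n : ℕ) : G n ≤ n := by
  have h : ⌊((n:ℝ)+1)*alph⌋ ≤ (n:ℤ) := by
    have : ((n:ℝ)+1)*alph < (n:ℝ)+1 := by
      nlinarith [alph_pos, alph_lt_one]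
    have h2 := Int.floor_lt.mpr (show ((n:ℝ)+1)*alph < (((n:ℤ)+1 : ℤ):ℝ) by push_cast; linarith)
    omega
  have := G_cast n
  omega

lemma G_zero : G 0 = 0 := by
  have h : ⌊(((0:ℕ):ℝ)+1)*alph⌋ = 0 := by
    rw [Int.floor_eq_iff]
    push_cast
    constructor
    · nlinarith [alph_pos]
    · nlinarith [alph_lt_one]
  have := G_cast 0
  omega

lemma key_nat (n : ℕ) (hn : 1 ≤ n) : G n + G (G (n-1)) = n := by
  have hcast : ((n-1 : ℕ):ℝ) + 1 = (n:ℝ) := by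
    have : ((n-1:ℕ):ℝ) = (n:ℝ) - 1 := by
      push_cast [Nat.cast_sub hn]; ring
    rw [this]; ring
  have hk := key n hn
  have h1 : (G (n-1) : ℤ) = ⌊(n:ℝ)*alph⌋ := by rw [G_cast, hcast]
  have h2 : (G (G (n-1)) : ℤ) = ⌊((⌊(n:ℝ)*alph⌋:ℝ)+1)*alph⌋ := by
    rw [G_cast]
    congr 1
    rw [← h1]
    push_cast
    ring_nf
  have h3 := G_cast n
  omega

theorem hofstadter_G_floor (h : ℕ → ℕ)
    (h0 : h 0 = 0)
    (hrec : ∀ n : ℕ, 1 ≤ n → h n = n - h (h (n - 1))) :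
    ∀ n : ℕ, 1 ≤ n →
      (h n : ℤ) = ⌊((n : ℝ) + 1) / phi⌋ ∧
      (h n : ℤ) = ⌊((n : ℝ) + 1) * phi⌋ - n - 1 := by
  have hG : ∀ n, h n = G n := by
    intro n
    induction n using Nat.strong_induction_on with
    | _ n ih =>
      rcases Nat.eq_zero_or_pos n with rfl | hn
      · rw [h0, G_zero]
      · rw [hrec n hn, ih (n-1) (by omega),
          ih (G (n-1)) (lt_of_le_of_lt (G_le (n-1)) (by omega))]
        have := key_nat n hn
        omega
  have hphi_alph : phi * alph = 1 := by
    unfold phi alph; nlinarith [sqrt5_sq]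
  have hphi_pos : 0 < phi := by unfold phi; linarith [sqrt5_lb]
  have hdiv : ∀ x : ℝ, x / phi = x * alph := by
    intro x
    rw [div_eq_iff (ne_of_gt hphi_pos), mul_assoc, mul_comm alph phi, hphi_alph, mul_one]
  have hpa : phi = alph + 1 := by unfold phi alph; ring
  intro n hn
  have hfirst : (h n : ℤ) = ⌊((n : ℝ) + 1) * alph⌋ := by
    rw [hG n, G_cast]
  constructor
  · rw [hdiv]; exact hfirst
  · rw [hpa]
    have : ((n:ℝ)+1) * (alph + 1) = ((n:ℝ)+1)*alph + ((n+1 : ℤ):ℝ) := by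
      push_cast; ring
    rw [this, Int.floor_add_intCast]
    push_cast
    rw [hfirst]
    ring
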